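/- (The three effects of information.) In the binary monopoly model with D_L and D_H three times continuously differentiable, the optimal-price function p is twice continuously differentiable on (0,1), the value function W^α is twice differentiable on (0,1), and for every μ ∈ (0,1): (W^α)''(μ) = p'(μ)²·[(1−μ)·(V_L^α)''(p(μ)) + μ·(V_H^α)''(p(μ))] + 2·p'(μ)·[(V_H^α)'(p(μ)) − (V_L^α)'(p(μ))] + p''(μ)·[(1−μ)·(V_L^α)'(p(μ)) + μ·(V_H^α)'(p(μ))]. -/

import Mathlib

open Set Filter Topology

/-- (The three effects of information.) In the binary monopoly model with
`D_L, D_H` three times continuously differentiable, the optimal-price function is `C²` on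
`(0,1)`, the value function `W^α` is twice differentiable on `(0,1)`, and its second
derivative decomposes into the three effects of information. -/
theorem stmt_3
    (I : Set ℝ) (DL DH RL RH : ℝ → ℝ) (pLs pHs : ℝ)
    (hIopen : IsOpen I) (hIconv : Convex ℝ I) (hIpos : I ⊆ Set.Ioi (0:ℝ))
    (hRL : RL = fun q => q * DL q) (hRH : RH = fun q => q * DH q)
    (hDL : ContDiffOn ℝ 3 DL I) (hDH : ContDiffOn ℝ 3 DH I)
    (hDLpos : ∀ q ∈ I, 0 < DL q) (hDHpos : ∀ q ∈ I, 0 < DH q)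
    (hDL' : ∀ q ∈ I, deriv DL q < 0) (hDH' : ∀ q ∈ I, deriv DH q < 0)
    (hRL'' : ∀ q ∈ I, deriv (deriv RL) q < 0) (hRH'' : ∀ q ∈ I, deriv (deriv RH) q < 0)
    (hpLs : pLs ∈ I) (hpHs : pHs ∈ I) (hlt : pLs < pHs)
    (hRL' : deriv RL pLs = 0) (hRH' : deriv RH pHs = 0)
    (p : ℝ → ℝ)
    (hp : ∀ μ ∈ Set.Icc (0:ℝ) 1, p μ ∈ Set.Icc pLs pHs ∧
      (1 - μ) * deriv RL (p μ) + μ * deriv RH (p μ) = 0)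
    (α : ℝ) (hα : α ∈ Set.Ioc (0:ℝ) 1)
    (CSL CSH VL VH : ℝ → ℝ)
    (hCSL : ∀ q ∈ I, HasDerivAt CSL (-(DL q)) q)
    (hCSH : ∀ q ∈ I, HasDerivAt CSH (-(DH q)) q)
    (hVL : VL = fun q => α * CSL q + (1 - α) * RL q)
    (hVH : VH = fun q => α * CSH q + (1 - α) * RH q)
    (W : ℝ → ℝ)
    (hW : W = fun μ => (1 - μ) * VL (p μ) + μ * VH (p μ)) :
    ContDiffOn ℝ 2 p (Set.Ioo 0 1) ∧
    (∀ μ ∈ Set.Ioo (0:ℝ) 1, DifferentiableAt ℝ W μ ∧ DifferentiableAt ℝ (deriv W) μ) ∧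
    ∀ μ ∈ Set.Ioo (0:ℝ) 1,
      deriv (deriv W) μ =
        (deriv p μ) ^ 2 *
            ((1 - μ) * deriv (deriv VL) (p μ) + μ * deriv (deriv VH) (p μ)) +
          2 * deriv p μ * (deriv VH (p μ) - deriv VL (p μ)) +
          deriv (deriv p) μ * ((1 - μ) * deriv VL (p μ) + μ * deriv VH (p μ)) := by
  have hIcc : Set.Icc pLs pHs ⊆ I := hIconv.ordConnected.out hpLs hpHs
  -- smoothness of revenue functions
  have hRLc : ContDiffOn ℝ 3 RL I := by rw [hRL]; exact contDiffOn_id.mul hDL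
  have hRHc : ContDiffOn ℝ 3 RH I := by rw [hRH]; exact contDiffOn_id.mul hDH
  have hrLc : ContDiffOn ℝ 2 (deriv RL) I := hRLc.deriv_of_isOpen hIopen (by norm_num)
  have hrHc : ContDiffOn ℝ 2 (deriv RH) I := hRHc.deriv_of_isOpen hIopen (by norm_num)
  have hrLc1 : ContDiffOn ℝ 1 (deriv (deriv RL)) I := hrLc.deriv_of_isOpen hIopen (by norm_num)
  have hrHc1 : ContDiffOn ℝ 1 (deriv (deriv RH)) I := hrHc.deriv_of_isOpen hIopen (by norm_num)
  have hdiffAt : ∀ f : ℝ → ℝ, ContDiffOn ℝ 1 f I → ∀ q ∈ I, DifferentiableAt ℝ f q :=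
    fun f hf q hq => (hf.differentiableOn one_ne_zero).differentiableAt (hIopen.mem_nhds hq)
  have hrLd : ∀ q ∈ I, DifferentiableAt ℝ (deriv RL) q := hdiffAt _ (hrLc.of_le (by norm_num))
  have hrHd : ∀ q ∈ I, DifferentiableAt ℝ (deriv RH) q := hdiffAt _ (hrHc.of_le (by norm_num))
  -- strict antitonicity of marginal revenues
  have hrLanti : StrictAntiOn (deriv RL) I :=
    strictAntiOn_of_deriv_neg hIconv hrLc.continuousOn
      (fun x hx => hRL'' x (by rwa [hIopen.interior_eq] at hx))
  have hrHanti : StrictAntiOn (deriv RH) I :=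
    strictAntiOn_of_deriv_neg hIconv hrHc.continuousOn
      (fun x hx => hRH'' x (by rwa [hIopen.interior_eq] at hx))
  -- sign facts on [pLs, pHs]
  have hrLle : ∀ q ∈ Set.Icc pLs pHs, deriv RL q ≤ 0 := by
    intro q hq
    rcases eq_or_lt_of_le hq.1 with h | h
    · rw [← h, hRL']
    · have := hrLanti hpLs (hIcc hq) h
      rw [hRL'] at this; linarith
  have hrLlt : ∀ q ∈ Set.Icc pLs pHs, pLs < q → deriv RL q < 0 := by
    intro q hq h
    have := hrLanti hpLs (hIcc hq) h
    rwa [hRL'] at this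
  have hrHge : ∀ q ∈ Set.Icc pLs pHs, 0 ≤ deriv RH q := by
    intro q hq
    rcases eq_or_lt_of_le hq.2 with h | h
    · rw [h, hRH']
    · have := hrHanti (hIcc hq) hpHs h
      rw [hRH'] at this; linarith
  have hrHgt : ∀ q ∈ Set.Icc pLs pHs, q < pHs → 0 < deriv RH q := by
    intro q hq h
    have := hrHanti (hIcc hq) hpHs h
    rwa [hRH'] at this
  have hdenom : ∀ q ∈ Set.Icc pLs pHs, deriv RL q - deriv RH q < 0 := by
    intro q hq
    rcases eq_or_lt_of_le hq.1 with h | h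
    · have h1 : 0 < deriv RH q := hrHgt q hq (by rw [← h]; exact hlt)
      have h2 : deriv RL q = 0 := by rw [← h, hRL']
      linarith
    · have h1 := hrLlt q hq h
      have h2 := hrHge q hq
      linarith
  set num : ℝ → ℝ :=
    fun q => deriv (deriv RH) q * deriv RL q - deriv (deriv RL) q * deriv RH q with hnumdef
  have hnum : ∀ q ∈ Set.Icc pLs pHs, 0 < num q := by
    intro q hq
    have haL := hRL'' q (hIcc hq)
    have haH := hRH'' q (hIcc hq)
    rcases eq_or_lt_of_le hq.2 with h | h
    · have h0 : deriv RH q = 0 := by rw [h, hRH']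
      have h1 : deriv RL q < 0 := hrLlt q hq (by rw [h]; exact hlt)
      simp only [hnumdef]
      nlinarith
    · have h2 : 0 < deriv RH q := hrHgt q hq h
      have h1 : deriv RL q ≤ 0 := hrLle q hq
      simp only [hnumdef]
      nlinarith
  -- the open neighborhood U of [pLs, pHs]
  set U : Set ℝ :=
    I ∩ (fun q => (deriv RL q - deriv RH q, num q)) ⁻¹' (Set.Iio 0 ×ˢ Set.Ioi 0) with hUdef
  have hUopen : IsOpen U := by
    apply ContinuousOn.isOpen_inter_preimage _ hIopen (isOpen_Iio.prod isOpen_Ioi)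
    exact (hrLc.continuousOn.sub hrHc.continuousOn).prodMk
      ((hrHc1.continuousOn.mul hrLc.continuousOn).sub
        (hrLc1.continuousOn.mul hrHc.continuousOn))
  have hUI : U ⊆ I := Set.inter_subset_left
  have hUd : ∀ q ∈ U, deriv RL q - deriv RH q < 0 := fun q hq => hq.2.1
  have hUn : ∀ q ∈ U, 0 < num q := fun q hq => hq.2.2
  have hIccU : Set.Icc pLs pHs ⊆ U := fun q hq => ⟨hIcc hq, hdenom q hq, hnum q hq⟩
  -- the inverse map φ and its derivative φd
  set φ : ℝ → ℝ := fun q => deriv RL q / (deriv RL q - deriv RH q) with hφdef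
  set φd : ℝ → ℝ := fun q => num q / (deriv RL q - deriv RH q) ^ 2 with hφddef
  have hφdpos : ∀ q ∈ U, 0 < φd q := by
    intro q hq
    have h2 : 0 < (deriv RL q - deriv RH q) ^ 2 := by nlinarith [hUd q hq]
    exact div_pos (hUn q hq) h2
  have hφderiv : ∀ q ∈ U, HasDerivAt φ (φd q) q := by
    intro q hq
    have h1 : HasDerivAt (deriv RL) (deriv (deriv RL) q) q := (hrLd q (hUI hq)).hasDerivAt
    have h2 : HasDerivAt (deriv RH) (deriv (deriv RH) q) q := (hrHd q (hUI hq)).hasDerivAt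
    have h3 := h1.div (h1.sub h2) (ne_of_lt (hUd q hq))
    refine h3.congr_deriv ?_
    have hne : deriv RL q - deriv RH q ≠ 0 := ne_of_lt (hUd q hq)
    simp only [hφddef, hnumdef, Pi.sub_apply]
    field_simp
    ring
  have hφp : ∀ μ ∈ Set.Icc (0:ℝ) 1, φ (p μ) = μ := by
    intro μ hμ
    obtain ⟨hq, heq⟩ := hp μ hμ
    have hd : deriv RL (p μ) - deriv RH (p μ) < 0 := hdenom _ hq
    simp only [hφdef]
    rw [div_eq_iff (ne_of_lt hd)]
    linear_combination heq
  have hφpLs : φ pLs = 0 := by simp [hφdef, hRL']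
  have hφpHs : φ pHs = 1 := by
    have h1 : deriv RL pHs < 0 := hrLlt pHs ⟨le_of_lt hlt, le_rfl⟩ hlt
    simp only [hφdef, hRH', sub_zero]
    exact div_self (ne_of_lt h1)
  have hφcont : ContinuousOn φ (Set.Icc pLs pHs) := fun q hq =>
    (hφderiv q (hIccU hq)).differentiableAt.continuousAt.continuousWithinAt
  have hφmono : StrictMonoOn φ (Set.Icc pLs pHs) := by
    apply strictMonoOn_of_deriv_pos (convex_Icc _ _) hφcont
    intro x hx
    rw [interior_Icc] at hx
    rw [(hφderiv x (hIccU (Set.Ioo_subset_Icc_self hx))).deriv]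
    exact hφdpos x (hIccU (Set.Ioo_subset_Icc_self hx))
  have hpIcc : ∀ μ ∈ Set.Icc (0:ℝ) 1, p μ ∈ Set.Icc pLs pHs := fun μ hμ => (hp μ hμ).1
  -- continuity of the price function
  have hpc : ∀ μ ∈ Set.Ioo (0:ℝ) 1, ContinuousAt p μ := by
    intro μ0 hμ0
    have hnb : Set.Ioo (0:ℝ) 1 ∈ 𝓝 μ0 := isOpen_Ioo.mem_nhds hμ0
    have hμ0I : μ0 ∈ Set.Icc (0:ℝ) 1 := Set.Ioo_subset_Icc_self hμ0
    have hpm := hpIcc μ0 hμ0I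
    rw [ContinuousAt]
    apply tendsto_order.2
    constructor
    · intro a ha
      by_cases hcase : a < pLs
      · filter_upwards [hnb] with μ hμ
        exact lt_of_lt_of_le hcase (hpIcc μ (Set.Ioo_subset_Icc_self hμ)).1
      · push_neg at hcase
        have haIcc : a ∈ Set.Icc pLs pHs := ⟨hcase, le_of_lt (lt_of_lt_of_le ha hpm.2)⟩
        have hfa : φ a < μ0 := by
          rw [← hφp μ0 hμ0I]
          exact hφmono haIcc hpm ha
        filter_upwards [hnb, Ioi_mem_nhds hfa] with μ hμ hμa
        by_contra hle
        push_neg at hle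
        have : φ (p μ) ≤ φ a :=
          hφmono.monotoneOn (hpIcc μ (Set.Ioo_subset_Icc_self hμ)) haIcc hle
        rw [hφp μ (Set.Ioo_subset_Icc_self hμ)] at this
        exact absurd hμa (not_lt.2 this)
    · intro b hb
      by_cases hcase : pHs < b
      · filter_upwards [hnb] with μ hμ
        exact lt_of_le_of_lt (hpIcc μ (Set.Ioo_subset_Icc_self hμ)).2 hcase
      · push_neg at hcase
        have hbIcc : b ∈ Set.Icc pLs pHs := ⟨le_of_lt (lt_of_le_of_lt hpm.1 hb), hcase⟩
        have hfb : μ0 < φ b := by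
          rw [← hφp μ0 hμ0I]
          exact hφmono hpm hbIcc hb
        filter_upwards [hnb, Iio_mem_nhds hfb] with μ hμ hμb
        by_contra hle
        push_neg at hle
        have : φ b ≤ φ (p μ) :=
          hφmono.monotoneOn hbIcc (hpIcc μ (Set.Ioo_subset_Icc_self hμ)) hle
        rw [hφp μ (Set.Ioo_subset_Icc_self hμ)] at this
        exact absurd hμb (not_lt.2 this)
  -- derivative of the price function
  have hpU : ∀ μ ∈ Set.Ioo (0:ℝ) 1, p μ ∈ U :=
    fun μ hμ => hIccU (hpIcc μ (Set.Ioo_subset_Icc_self hμ))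
  have hpd : ∀ μ ∈ Set.Ioo (0:ℝ) 1, HasDerivAt p (φd (p μ))⁻¹ μ := by
    intro μ hμ
    refine HasDerivAt.of_local_left_inverse (hpc μ hμ) (hφderiv _ (hpU μ hμ))
      (ne_of_gt (hφdpos _ (hpU μ hμ))) ?_
    filter_upwards [isOpen_Ioo.mem_nhds hμ] with y hy
    exact hφp y (Set.Ioo_subset_Icc_self hy)
  have hderivp : ∀ μ ∈ Set.Ioo (0:ℝ) 1, deriv p μ = (φd (p μ))⁻¹ :=
    fun μ hμ => (hpd μ hμ).deriv
  -- C² regularity of p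
  have hφdC1 : ContDiffOn ℝ 1 φd U := by
    apply ContDiffOn.div
    · exact ((hrHc1.mul (hrLc.of_le (by norm_num))).sub
        (hrLc1.mul (hrHc.of_le (by norm_num)))).mono hUI
    · exact (((hrLc.of_le (by norm_num : (1:WithTop ℕ∞) ≤ 2)).sub
        (hrHc.of_le (by norm_num))).pow 2).mono hUI
    · exact fun q hq => pow_ne_zero 2 (ne_of_lt (hUd q hq))
  have hgC1 : ContDiffOn ℝ 1 (fun q => (φd q)⁻¹) U :=
    hφdC1.inv fun q hq => ne_of_gt (hφdpos q hq)
  have hpmaps : Set.MapsTo p (Set.Ioo 0 1) U := fun μ hμ => hpU μ hμ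
  have hpdiffOn : DifferentiableOn ℝ p (Set.Ioo 0 1) :=
    fun μ hμ => (hpd μ hμ).differentiableAt.differentiableWithinAt
  have hpcontOn : ContinuousOn p (Set.Ioo 0 1) := hpdiffOn.continuousOn
  have hpC1 : ContDiffOn ℝ 1 p (Set.Ioo 0 1) := by
    rw [show (1 : WithTop ℕ∞) = 0 + 1 from (zero_add 1).symm,
      contDiffOn_succ_iff_deriv_of_isOpen isOpen_Ioo]
    refine ⟨hpdiffOn, by simp, ?_⟩
    rw [contDiffOn_zero]
    exact (hgC1.continuousOn.comp hpcontOn hpmaps).congr fun μ hμ => hderivp μ hμ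
  have hderivpC1 : ContDiffOn ℝ 1 (deriv p) (Set.Ioo 0 1) :=
    (hgC1.comp hpC1 hpmaps).congr fun μ hμ => hderivp μ hμ
  have hpC2 : ContDiffOn ℝ 2 p (Set.Ioo 0 1) := by
    rw [show (2 : WithTop ℕ∞) = 1 + 1 from one_add_one_eq_two.symm,
      contDiffOn_succ_iff_deriv_of_isOpen isOpen_Ioo]
    exact ⟨hpdiffOn, by simp, hderivpC1⟩
  have hpda : ∀ μ ∈ Set.Ioo (0:ℝ) 1, HasDerivAt p (deriv p μ) μ :=
    fun μ hμ => (hpd μ hμ).differentiableAt.hasDerivAt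
  have hpdd : ∀ μ ∈ Set.Ioo (0:ℝ) 1, HasDerivAt (deriv p) (deriv (deriv p) μ) μ :=
    fun μ hμ => ((hderivpC1.differentiableOn one_ne_zero).differentiableAt
      (isOpen_Ioo.mem_nhds hμ)).hasDerivAt
  -- derivatives of the payoff functions
  have hRLdiff : ∀ q ∈ I, HasDerivAt RL (deriv RL q) q := fun q hq =>
    ((hRLc.differentiableOn (by norm_num)).differentiableAt (hIopen.mem_nhds hq)).hasDerivAt
  have hRHdiff : ∀ q ∈ I, HasDerivAt RH (deriv RH q) q := fun q hq =>
    ((hRHc.differentiableOn (by norm_num)).differentiableAt (hIopen.mem_nhds hq)).hasDerivAt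
  have hDLdiff : ∀ q ∈ I, HasDerivAt DL (deriv DL q) q := fun q hq =>
    ((hDL.differentiableOn (by norm_num)).differentiableAt (hIopen.mem_nhds hq)).hasDerivAt
  have hDHdiff : ∀ q ∈ I, HasDerivAt DH (deriv DH q) q := fun q hq =>
    ((hDH.differentiableOn (by norm_num)).differentiableAt (hIopen.mem_nhds hq)).hasDerivAt
  have hrLdiff : ∀ q ∈ I, HasDerivAt (deriv RL) (deriv (deriv RL) q) q := fun q hq =>
    (hrLd q hq).hasDerivAt
  have hrHdiff : ∀ q ∈ I, HasDerivAt (deriv RH) (deriv (deriv RH) q) q := fun q hq =>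
    (hrHd q hq).hasDerivAt
  set vL : ℝ → ℝ := fun q => α * -(DL q) + (1 - α) * deriv RL q with hvLdef
  set vH : ℝ → ℝ := fun q => α * -(DH q) + (1 - α) * deriv RH q with hvHdef
  set vL' : ℝ → ℝ := fun q => α * -(deriv DL q) + (1 - α) * deriv (deriv RL) q with hvL'def
  set vH' : ℝ → ℝ := fun q => α * -(deriv DH q) + (1 - α) * deriv (deriv RH) q with hvH'def
  have hVLd : ∀ q ∈ I, HasDerivAt VL (vL q) q := by
    intro q hq; rw [hVL]
    exact ((hCSL q hq).const_mul α).add ((hRLdiff q hq).const_mul (1 - α))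
  have hVHd : ∀ q ∈ I, HasDerivAt VH (vH q) q := by
    intro q hq; rw [hVH]
    exact ((hCSH q hq).const_mul α).add ((hRHdiff q hq).const_mul (1 - α))
  have hvLd : ∀ q ∈ I, HasDerivAt vL (vL' q) q := fun q hq =>
    ((hDLdiff q hq).neg.const_mul α).add ((hrLdiff q hq).const_mul (1 - α))
  have hvHd : ∀ q ∈ I, HasDerivAt vH (vH' q) q := fun q hq =>
    ((hDHdiff q hq).neg.const_mul α).add ((hrHdiff q hq).const_mul (1 - α))
  have hderivVL : ∀ q ∈ I, deriv VL q = vL q := fun q hq => (hVLd q hq).deriv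
  have hderivVH : ∀ q ∈ I, deriv VH q = vH q := fun q hq => (hVHd q hq).deriv
  have hVLdd : ∀ q ∈ I, HasDerivAt (deriv VL) (vL' q) q := by
    intro q hq
    apply (hvLd q hq).congr_of_eventuallyEq
    filter_upwards [hIopen.mem_nhds hq] with y hy
    exact hderivVL y hy
  have hVHdd : ∀ q ∈ I, HasDerivAt (deriv VH) (vH' q) q := by
    intro q hq
    apply (hvHd q hq).congr_of_eventuallyEq
    filter_upwards [hIopen.mem_nhds hq] with y hy
    exact hderivVH y hy
  have hddVL : ∀ q ∈ I, deriv (deriv VL) q = vL' q := fun q hq => (hVLdd q hq).deriv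
  have hddVH : ∀ q ∈ I, deriv (deriv VH) q = vH' q := fun q hq => (hVHdd q hq).deriv
  -- derivatives of W
  have hqI : ∀ μ ∈ Set.Ioo (0:ℝ) 1, p μ ∈ I :=
    fun μ hμ => hIcc (hpIcc μ (Set.Ioo_subset_Icc_self hμ))
  set W1 : ℝ → ℝ :=
    fun μ => (VH (p μ) - VL (p μ)) + deriv p μ * ((1 - μ) * vL (p μ) + μ * vH (p μ))
    with hW1def
  have hWd : ∀ μ ∈ Set.Ioo (0:ℝ) 1, HasDerivAt W (W1 μ) μ := by
    intro μ hμ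
    have hpI := hqI μ hμ
    have hVLp : HasDerivAt (fun t => VL (p t)) (vL (p μ) * deriv p μ) μ :=
      (hVLd _ hpI).comp μ (hpda μ hμ)
    have hVHp : HasDerivAt (fun t => VH (p t)) (vH (p μ) * deriv p μ) μ :=
      (hVHd _ hpI).comp μ (hpda μ hμ)
    have h1 : HasDerivAt (fun t : ℝ => 1 - t) (-1) μ := by
      simpa using (hasDerivAt_id μ).const_sub 1
    have h := (h1.mul hVLp).add ((hasDerivAt_id μ).mul hVHp)
    rw [hW]
    refine h.congr_deriv ?_
    simp only [hW1def, id_eq]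
    ring
  have hderivWev : ∀ μ ∈ Set.Ioo (0:ℝ) 1, deriv W =ᶠ[𝓝 μ] W1 := by
    intro μ hμ
    filter_upwards [isOpen_Ioo.mem_nhds hμ] with t ht
    exact (hWd t ht).deriv
  have hW1d : ∀ μ ∈ Set.Ioo (0:ℝ) 1, HasDerivAt W1
      ((deriv p μ) ^ 2 * ((1 - μ) * vL' (p μ) + μ * vH' (p μ)) +
        2 * deriv p μ * (vH (p μ) - vL (p μ)) +
        deriv (deriv p) μ * ((1 - μ) * vL (p μ) + μ * vH (p μ))) μ := by
    intro μ hμ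
    have hpI := hqI μ hμ
    have hVLp : HasDerivAt (fun t => VL (p t)) (vL (p μ) * deriv p μ) μ :=
      (hVLd _ hpI).comp μ (hpda μ hμ)
    have hVHp : HasDerivAt (fun t => VH (p t)) (vH (p μ) * deriv p μ) μ :=
      (hVHd _ hpI).comp μ (hpda μ hμ)
    have hvLp : HasDerivAt (fun t => vL (p t)) (vL' (p μ) * deriv p μ) μ :=
      (hvLd _ hpI).comp μ (hpda μ hμ)
    have hvHp : HasDerivAt (fun t => vH (p t)) (vH' (p μ) * deriv p μ) μ :=
      (hvHd _ hpI).comp μ (hpda μ hμ)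
    have h1 : HasDerivAt (fun t : ℝ => 1 - t) (-1) μ := by
      simpa using (hasDerivAt_id μ).const_sub 1
    have hC : HasDerivAt (fun t => (1 - t) * vL (p t) + t * vH (p t))
        ((-1) * vL (p μ) + (1 - μ) * (vL' (p μ) * deriv p μ) +
          (1 * vH (p μ) + μ * (vH' (p μ) * deriv p μ))) μ :=
      (h1.mul hvLp).add ((hasDerivAt_id μ).mul hvHp)
    have h := (hVHp.sub hVLp).add ((hpdd μ hμ).mul hC)
    refine h.congr_deriv ?_
    ring
  refine ⟨hpC2, ?_, ?_⟩
  · intro μ hμ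
    exact ⟨(hWd μ hμ).differentiableAt,
      (hderivWev μ hμ).differentiableAt_iff.mpr (hW1d μ hμ).differentiableAt⟩
  · intro μ hμ
    have hpI := hqI μ hμ
    rw [(hderivWev μ hμ).deriv_eq, (hW1d μ hμ).deriv,
      hderivVL _ hpI, hderivVH _ hpI, hddVL _ hpI, hddVH _ hpI]
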